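/- Let G_1 and G_2 be finite simple bipartite graphs, both C_{4k}-free (containing no cycle whose length is divisible by 4). Then G_1 and G_2 are cospectral (have equal characteristic polynomials det(xI − A(G_1)) = det(xI − A(G_2))) if and only if they are per-cospectral (have equal permanental polynomials per(xI − A(G_1)) = per(xI − A(G_2))). -/

import Mathlib

open Polynomial SimpleGraph
open scoped Classical

noncomputable section

/-- The adjacency matrix of a simple graph `G`, with entries in `R`. -/
def adjMat (R : Type*) [Zero R] [One R] {V : Type*} [Fintype V] (G : SimpleGraph V) :
    Matrix V V R := fun u v => if G.Adj u v then 1 else 0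

/-- The characteristic polynomial `det (xI - A(G))` of a simple graph `G`. -/
def charPolyG (R : Type*) [CommRing R] {V : Type*} [Fintype V] (G : SimpleGraph V) : R[X] :=
  (adjMat R G).charpoly

/-- The permanental polynomial `per (xI - A(G))` of a simple graph `G`. -/
def permPolyG (R : Type*) [CommRing R] {V : Type*} [Fintype V] (G : SimpleGraph V) : R[X] :=
  (Matrix.charmatrix (adjMat R G)).permanent

/-- The modified characteristic polynomial `φ_p(G,x) = ∑_{i even} (-1)^{i/2} a_i x^{n-i}`
of a (bipartite) graph `G` on `n` vertices, where `a_i` is the coefficient of `x^{n-i}`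
in the characteristic polynomial. -/
def phiP {V : Type*} [Fintype V] (G : SimpleGraph V) : ℝ[X] :=
  ∑ i ∈ Finset.range (Fintype.card V + 1),
    if Even i then
      C ((-1 : ℝ) ^ (i / 2) * (charPolyG ℝ G).coeff (Fintype.card V - i)) *
        X ^ (Fintype.card V - i)
    else 0

/-- `G` contains no cycle whose length is divisible by 4. -/
def C4kFree {V : Type*} (G : SimpleGraph V) : Prop :=
  ¬ ∃ (v : V) (c : G.Walk v v), c.IsCycle ∧ 4 ∣ c.length

/-- `G` is `4k`-intercyclic: it contains no two vertex-disjoint cycles,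
each of length divisible by 4. -/
def Intercyclic4k {V : Type*} (G : SimpleGraph V) : Prop :=
  ¬ ∃ (u v : V) (c : G.Walk u u) (d : G.Walk v v),
      c.IsCycle ∧ d.IsCycle ∧ 4 ∣ c.length ∧ 4 ∣ d.length ∧
      ∀ x, x ∈ c.support → x ∉ d.support

/-- A subgraph `R` of `G` is a cycle of `G` if it is the subgraph traced by some cycle walk. -/
def IsCycleSubgraph {V : Type*} (G : SimpleGraph V) (R : G.Subgraph) : Prop :=
  ∃ (v : V) (c : G.Walk v v), c.IsCycle ∧ R = c.toSubgraph

/-- The set of all `4k`-cycles (cycles of length divisible by 4) of `G`,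
viewed as subgraphs. -/
def cycles4k {V : Type*} (G : SimpleGraph V) : Set G.Subgraph :=
  {R | ∃ (v : V) (c : G.Walk v v), c.IsCycle ∧ 4 ∣ c.length ∧ R = c.toSubgraph}

/-- The connected component `c` of the subgraph `H` is a single edge (a `K₂`). -/
def IsEdgeComp {V : Type*} {G : SimpleGraph V} (H : G.Subgraph)
    (c : H.coe.ConnectedComponent) : Prop :=
  ∃ x y : H.verts, H.coe.Adj x y ∧ c.supp = {x, y}

/-- The connected component `c` of the subgraph `H` is a cycle: there is a cycle walk whose
support is exactly `c` and which uses every edge of `H` inside `c`. -/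
def IsCycleComp {V : Type*} {G : SimpleGraph V} (H : G.Subgraph)
    (c : H.coe.ConnectedComponent) : Prop :=
  ∃ (v : H.verts) (w : H.coe.Walk v v), w.IsCycle ∧
    {x | x ∈ w.support} = c.supp ∧
    ∀ x y : H.verts, H.coe.Adj x y → x ∈ c.supp → w.toSubgraph.Adj x y

/-- A Sachs subgraph of `G`: a subgraph each of whose connected components is either
a single edge or a cycle. -/
def IsSachs {V : Type*} {G : SimpleGraph V} (H : G.Subgraph) : Prop :=
  ∀ c : H.coe.ConnectedComponent, IsEdgeComp H c ∨ IsCycleComp H c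

/-- The number of connected components of the subgraph `H`. -/
def pCount {V : Type*} {G : SimpleGraph V} (H : G.Subgraph) : ℕ :=
  Nat.card H.coe.ConnectedComponent

/-- The number of components of `H` that are cycles of length divisible by 4. -/
def sCount {V : Type*} {G : SimpleGraph V} (H : G.Subgraph) : ℕ :=
  Set.ncard {c : H.coe.ConnectedComponent | IsCycleComp H c ∧ c.supp.ncard % 4 = 0}

/-- The number of components of `H` that are cycles of length congruent to 2 mod 4. -/
def tCount {V : Type*} {G : SimpleGraph V} (H : G.Subgraph) : ℕ :=
  Set.ncard {c : H.coe.ConnectedComponent | IsCycleComp H c ∧ c.supp.ncard % 4 = 2}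

/-- The number of components of `H` that are cycles. -/
def cycCount {V : Type*} {G : SimpleGraph V} (H : G.Subgraph) : ℕ :=
  Set.ncard {c : H.coe.ConnectedComponent | IsCycleComp H c}

/-- `R` is a union of connected components of `H`. -/
def IsComponentUnion {V : Type*} {G : SimpleGraph V} (R H : G.Subgraph) : Prop :=
  R ≤ H ∧ ∀ x y, H.Adj x y → x ∈ R.verts → R.Adj x y


section AuxC4k

section WalkConstruction
variable {V : Type*} {G : SimpleGraph V}

/-- Walk following iterates of a permutation. -/
def iterWalk (τ : Equiv.Perm V) (v : V)
    (h : ∀ k : ℕ, G.Adj ((τ ^ k) v) ((τ ^ (k + 1)) v)) : (k : ℕ) → G.Walk v ((τ ^ k) v)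
  | 0 => Walk.nil.copy rfl (by simp)
  | k + 1 => (iterWalk τ v h k).concat (h k)

lemma iterWalk_length (τ : Equiv.Perm V) (v : V) (h) (k : ℕ) :
    (iterWalk (G := G) τ v h k).length = k := by
  induction k with
  | zero => simp [iterWalk]
  | succ k ih => simp [iterWalk, Walk.length_concat, ih]

lemma iterWalk_support (τ : Equiv.Perm V) (v : V) (h) (k : ℕ) :
    (iterWalk (G := G) τ v h k).support = (List.range (k + 1)).map (fun i => (τ ^ i) v) := by
  induction k with
  | zero => simp [iterWalk, List.range_succ]
  | succ k ih =>
      simp only [iterWalk, Walk.support_concat, ih, List.range_succ (n := k + 1)]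
      simp

lemma iterWalk_edges (τ : Equiv.Perm V) (v : V) (h) (k : ℕ) :
    (iterWalk (G := G) τ v h k).edges
      = (List.range k).map (fun i => s((τ ^ i) v, (τ ^ (i + 1)) v)) := by
  induction k with
  | zero => simp [iterWalk]
  | succ k ih =>
      simp only [iterWalk, Walk.edges_concat, ih, List.range_succ (n := k)]
      simp

end WalkConstruction

section PermCycle
variable {V : Type*} [Fintype V] [DecidableEq V]

lemma pow_apply_eq_iff_modEq {τ : Equiv.Perm V} (hτ : τ.IsCycle) {v : V}
    (hv : v ∈ τ.support) {a b : ℕ} :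
    (τ ^ a) v = (τ ^ b) v ↔ a ≡ b [MOD τ.support.card] := by
  have hord : orderOf τ = τ.support.card := hτ.orderOf
  have hpos : 0 < τ.support.card := lt_of_lt_of_le two_pos hτ.two_le_card_support
  have key : ∀ {c d : ℕ}, c < τ.support.card → d < τ.support.card →
      (τ ^ c) v = (τ ^ d) v → c = d := by
    have aux : ∀ {c d : ℕ}, c ≤ d → d < τ.support.card →
        (τ ^ c) v = (τ ^ d) v → c = d := by
      intro c d hcd hd he
      have h1 : (τ ^ (d - c)) ((τ ^ c) v) = (τ ^ c) v := by
        rw [← Equiv.Perm.mul_apply, ← pow_add]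
        rw [Nat.sub_add_cancel hcd, ← he]
      have hmem : (τ ^ c) v ∈ τ.support := Equiv.Perm.pow_apply_mem_support.2 hv
      have h2 : τ ^ (d - c) = 1 := (hτ.pow_eq_one_iff' (Equiv.Perm.mem_support.1 hmem)).2 h1
      have h3 : τ.support.card ∣ d - c := by
        rw [← hord]; exact orderOf_dvd_of_pow_eq_one h2
      have := Nat.eq_zero_of_dvd_of_lt h3 (lt_of_le_of_lt (Nat.sub_le d c) hd)
      omega
    intro c d hc hd he
    rcases le_total c d with h | h
    · exact aux h hd he
    · exact (aux h hc he.symm).symm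
  constructor
  · intro he
    have ha : (τ ^ (a % τ.support.card)) v = (τ ^ a) v := by
      conv_rhs => rw [← pow_mod_orderOf]
      rw [hord]
    have hb : (τ ^ (b % τ.support.card)) v = (τ ^ b) v := by
      conv_rhs => rw [← pow_mod_orderOf]
      rw [hord]
    exact key (Nat.mod_lt _ hpos) (Nat.mod_lt _ hpos) (ha.trans (he.trans hb.symm))
  · intro he
    have h1 : τ ^ a = τ ^ (a % τ.support.card) := by rw [← hord, pow_mod_orderOf]
    have h2 : τ ^ b = τ ^ (b % τ.support.card) := by rw [← hord, pow_mod_orderOf]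
    rw [h1, h2, he]

/-- From a permutation cycle of length ≥ 3 along edges of `G`, build a graph cycle. -/
lemma exists_cycle_of_perm_cycle {G : SimpleGraph V} {τ : Equiv.Perm V} (hτ : τ.IsCycle)
    {v : V} (hv : v ∈ τ.support)
    (hadj : ∀ i ∈ τ.support, G.Adj i (τ i)) (h3 : 3 ≤ τ.support.card) :
    ∃ c : G.Walk v v, c.IsCycle ∧ c.length = τ.support.card := by
  set L := τ.support.card with hL
  have hstep : ∀ k : ℕ, G.Adj ((τ ^ k) v) ((τ ^ (k + 1)) v) := by
    intro k
    have hmem : (τ ^ k) v ∈ τ.support := Equiv.Perm.pow_apply_mem_support.2 hv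
    have h : (τ ^ (k + 1)) v = τ ((τ ^ k) v) := by
      rw [pow_succ']; rfl
    rw [h]
    exact hadj _ hmem
  have hvL : (τ ^ L) v = v := by
    have h : τ ^ L = 1 := by rw [hL, ← hτ.orderOf, pow_orderOf_eq_one]
    simp [h]
  have hlen : ((iterWalk τ v hstep L).copy rfl hvL).length = L := by
    rw [Walk.length_copy, iterWalk_length]
  refine ⟨((iterWalk τ v hstep L).copy rfl hvL), ⟨⟨⟨?_⟩, ?_⟩, ?_⟩, hlen⟩
  · rw [Walk.edges_copy, iterWalk_edges]
    refine List.Nodup.map_on ?_ List.nodup_range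
    intro a ha b hb he
    rw [List.mem_range] at ha hb
    simp only [Sym2.eq_iff] at he
    rcases he with ⟨h1, h2⟩ | ⟨h1, h2⟩
    · have := (pow_apply_eq_iff_modEq hτ hv).1 h1
      rw [Nat.ModEq, Nat.mod_eq_of_lt ha, Nat.mod_eq_of_lt hb] at this
      exact this
    · exfalso
      have e1 : a ≡ b + 1 [MOD L] := (pow_apply_eq_iff_modEq hτ hv).1 h1
      have e2 : a + 1 ≡ b [MOD L] := (pow_apply_eq_iff_modEq hτ hv).1 h2
      have e3 : a ≡ a + 2 [MOD L] := e1.trans ((e2.add_right 1).symm)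
      have hdvd : L ∣ 2 := by
        have := (Nat.modEq_iff_dvd' (by omega : a ≤ a + 2)).1 e3
        simpa using this
      have := Nat.le_of_dvd two_pos hdvd
      omega
  · intro hn
    rw [hn] at hlen
    simp at hlen
    omega
  · rw [Walk.support_copy, iterWalk_support, List.range_succ_eq_map, List.map_cons,
      List.tail_cons, List.map_map]
    refine List.Nodup.map_on ?_ List.nodup_range
    intro a ha b hb he
    rw [List.mem_range] at ha hb
    have := (pow_apply_eq_iff_modEq hτ hv).1 he
    rw [Nat.ModEq] at this
    simp only [Nat.succ_eq_add_one, ← hL] at this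
    rcases Nat.lt_or_ge (a + 1) L with h | h
    · rcases Nat.lt_or_ge (b + 1) L with h' | h'
      · rw [Nat.mod_eq_of_lt h, Nat.mod_eq_of_lt h'] at this
        omega
      · have hb1 : b + 1 = L := by omega
        rw [Nat.mod_eq_of_lt h, hb1, Nat.mod_self] at this
        omega
    · have ha1 : a + 1 = L := by omega
      rcases Nat.lt_or_ge (b + 1) L with h' | h'
      · rw [ha1, Nat.mod_self, Nat.mod_eq_of_lt h'] at this
        omega
      · omega

lemma fin2_ne_iff {x y z : Fin 2} (h : x ≠ y) : (x = z) ↔ ¬ (y = z) := by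
  revert h; revert x y z; decide

lemma perm_cycle_card_even {G : SimpleGraph V} (hbip : G.Colorable 2) {τ : Equiv.Perm V}
    (hτ : τ.IsCycle) (hadj : ∀ i ∈ τ.support, G.Adj i (τ i)) :
    τ.support.card % 2 = 0 := by
  obtain ⟨v, hv0, -⟩ := id hτ
  have hv : v ∈ τ.support := Equiv.Perm.mem_support.2 hv0
  have hstep : ∀ k : ℕ, G.Adj ((τ ^ k) v) ((τ ^ (k + 1)) v) := by
    intro k
    have hmem : (τ ^ k) v ∈ τ.support := Equiv.Perm.pow_apply_mem_support.2 hv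
    have h : (τ ^ (k + 1)) v = τ ((τ ^ k) v) := by rw [pow_succ']; rfl
    rw [h]; exact hadj _ hmem
  obtain ⟨C⟩ := hbip
  have main : ∀ k : ℕ, (C ((τ ^ k) v) = C v) ↔ k % 2 = 0 := by
    intro k
    induction k with
    | zero => simp
    | succ k ih =>
        have hne : C ((τ ^ (k + 1)) v) ≠ C ((τ ^ k) v) := (C.valid (hstep k)).symm
        rw [fin2_ne_iff hne, ih]
        omega
  have hL : (τ ^ τ.support.card) v = v := by
    have h : τ ^ τ.support.card = 1 := by rw [← hτ.orderOf, pow_orderOf_eq_one]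
    simp [h]
  exact (main τ.support.card).1 (by rw [hL])

lemma multiset_sum_mod4 (s : Multiset ℕ) (h : ∀ n ∈ s, n % 4 = 2) :
    s.sum % 4 = (2 * Multiset.card s) % 4 := by
  induction s using Multiset.induction_on with
  | empty => simp
  | cons a s ih =>
      simp only [Multiset.sum_cons, Multiset.card_cons]
      have ha := h a (Multiset.mem_cons_self a s)
      have hs := ih (fun n hn => h n (Multiset.mem_cons_of_mem hn))
      omega

lemma neg_one_pow_congr' {a b : ℕ} (h : a % 2 = b % 2) : ((-1 : ℝ) ^ a) = (-1) ^ b := by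
  conv_lhs => rw [← Nat.div_add_mod a 2]
  conv_rhs => rw [← Nat.div_add_mod b 2]
  rw [h, pow_add, pow_add, pow_mul, pow_mul]
  norm_num

lemma adj_cycle_card_mod4 {G : SimpleGraph V} (hbip : G.Colorable 2) (hfree : C4kFree G)
    {τ : Equiv.Perm V} (hτ : τ.IsCycle) (hadj : ∀ i ∈ τ.support, G.Adj i (τ i)) :
    τ.support.card % 4 = 2 := by
  have heven := perm_cycle_card_even hbip hτ hadj
  by_contra h
  have h2 := hτ.two_le_card_support
  have h4 : 4 ∣ τ.support.card := by omega
  have h3 : 3 ≤ τ.support.card := by omega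
  obtain ⟨v, hv0, -⟩ := id hτ
  have hv : v ∈ τ.support := Equiv.Perm.mem_support.2 hv0
  obtain ⟨c, hc, hlen⟩ := exists_cycle_of_perm_cycle hτ hv hadj h3
  exact hfree ⟨v, c, hc, by rw [hlen]; exact h4⟩

lemma sign_eq_of_adj {G : SimpleGraph V} (hbip : G.Colorable 2) (hfree : C4kFree G)
    (σ : Equiv.Perm V) (hadj : ∀ i ∈ σ.support, G.Adj i (σ i)) :
    σ.support.card % 2 = 0 ∧
      ((Equiv.Perm.sign σ : ℤ) : ℝ) = (-1) ^ (σ.support.card / 2) := by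
  have hcyc : ∀ n ∈ σ.cycleType, n % 4 = 2 := by
    intro n hn
    rw [Equiv.Perm.cycleType_def, Multiset.mem_map] at hn
    obtain ⟨τ, hτm, rfl⟩ := hn
    have hτm' : τ ∈ σ.cycleFactorsFinset := hτm
    obtain ⟨hτc, hτeq⟩ := Equiv.Perm.mem_cycleFactorsFinset_iff.1 hτm'
    refine adj_cycle_card_mod4 hbip hfree hτc ?_
    intro i hi
    have hne : τ i ≠ i := Equiv.Perm.mem_support.1 hi
    have hisup : i ∈ σ.support := Equiv.Perm.mem_support.2 (by rw [← hτeq i hi]; exact hne)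
    rw [hτeq i hi]
    exact hadj i hisup
  have hsum : σ.cycleType.sum % 4 = (2 * Multiset.card σ.cycleType) % 4 :=
    multiset_sum_mod4 _ hcyc
  rw [Equiv.Perm.sum_cycleType] at hsum
  set m := σ.support.card with hm
  set c := Multiset.card σ.cycleType with hc
  have hsign : ((Equiv.Perm.sign σ : ℤ) : ℝ) = (-1) ^ (m + c) := by
    rw [Equiv.Perm.sign_of_cycleType, Equiv.Perm.sum_cycleType]
    push_cast
    norm_num
    rfl
  refine ⟨by omega, ?_⟩
  rw [hsign]
  exact neg_one_pow_congr' (by omega)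

end PermCycle

section PhiTransform

def epsR (n j : ℕ) : ℝ := (-1) ^ ((n - j) / 2)

def PhiT (n : ℕ) (p : ℝ[X]) : ℝ[X] := p.sum fun j a => C (epsR n j * a) * X ^ j

lemma PhiT_coeff (n : ℕ) (p : ℝ[X]) (k : ℕ) : (PhiT n p).coeff k = epsR n k * p.coeff k := by
  rw [PhiT, Polynomial.sum, finset_sum_coeff]
  simp only [coeff_C_mul, coeff_X_pow, mul_ite, mul_one, mul_zero]
  rw [Finset.sum_ite_eq p.support k (fun j => epsR n j * p.coeff j)]
  by_cases h : k ∈ p.support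
  · simp [h]
  · simp [h, Polynomial.notMem_support_iff.1 h]

lemma PhiT_PhiT (n : ℕ) (p : ℝ[X]) : PhiT n (PhiT n p) = p := by
  ext k
  rw [PhiT_coeff, PhiT_coeff, ← mul_assoc]
  have h : epsR n k * epsR n k = 1 := by
    rw [epsR, ← pow_add]
    exact Even.neg_one_pow ⟨_, rfl⟩
  rw [h, one_mul]

lemma PhiT_natDegree (n : ℕ) (p : ℝ[X]) : (PhiT n p).natDegree = p.natDegree := by
  have key : ∀ q : ℝ[X], (PhiT n q).natDegree ≤ q.natDegree := by
    intro q
    rw [Polynomial.natDegree_le_iff_coeff_eq_zero]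
    intro N hN
    rw [PhiT_coeff, Polynomial.coeff_eq_zero_of_natDegree_lt hN, mul_zero]
  refine le_antisymm (key p) ?_
  conv_lhs => rw [← PhiT_PhiT n p]
  exact key _

end PhiTransform

theorem perm_eq_PhiT {V : Type*} [Fintype V] (G : SimpleGraph V)
    (hbip : G.Colorable 2) (hfree : C4kFree G) :
    permPolyG ℝ G = PhiT (Fintype.card V) (charPolyG ℝ G) := by
  classical
  set n := Fintype.card V with hn
  set M : Matrix V V ℝ := adjMat ℝ G with hM
  have hper : permPolyG ℝ G = ∑ σ : Equiv.Perm V, ∏ i, (Matrix.charmatrix M) (σ i) i := rfl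
  have hdet : charPolyG ℝ G
      = ∑ σ : Equiv.Perm V, ((Equiv.Perm.sign σ : ℤ) : ℝ[X]) *
          ∏ i, (Matrix.charmatrix M) (σ i) i := by
    rw [charPolyG, Matrix.charpoly, Matrix.det_apply']
  ext k
  rw [hper, hdet, PhiT_coeff, finset_sum_coeff, finset_sum_coeff, Finset.mul_sum]
  refine Finset.sum_congr rfl ?_
  intro σ _
  rw [← Polynomial.C_eq_intCast, coeff_C_mul]
  by_cases hAdj : ∀ i ∈ σ.support, G.Adj (σ i) i
  · have hadj' : ∀ i ∈ σ.support, G.Adj i (σ i) := fun i hi => (hAdj i hi).symm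
    obtain ⟨hm2, hsgn⟩ := sign_eq_of_adj hbip hfree σ hadj'
    have hmn : σ.support.card ≤ n := by rw [hn]; exact Finset.card_le_univ _
    have hprod : (∏ i, (Matrix.charmatrix M) (σ i) i) = X ^ (n - σ.support.card) := by
      rw [← Finset.prod_mul_prod_compl σ.support]
      have h1 : ∀ i ∈ σ.support, (Matrix.charmatrix M) (σ i) i = -1 := by
        intro i hi
        rw [Matrix.charmatrix_apply_ne _ _ _ (Equiv.Perm.mem_support.1 hi)]
        rw [hM]
        simp [adjMat, hAdj i hi]
      have h2 : ∀ i ∈ σ.supportᶜ, (Matrix.charmatrix M) (σ i) i = X := by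
        intro i hi
        have hfix : σ i = i := by
          have h := Finset.mem_compl.1 hi
          rw [Equiv.Perm.mem_support, not_not] at h
          exact h
        rw [hfix, Matrix.charmatrix_apply_eq, hM]
        simp [adjMat]
      rw [Finset.prod_congr rfl h1, Finset.prod_congr rfl h2, Finset.prod_const,
        Finset.prod_const, Finset.card_compl]
      have h : ((-1 : ℝ[X])) ^ σ.support.card = 1 :=
        Even.neg_one_pow (Nat.even_iff.2 hm2)
      rw [h, one_mul, hn]
    rw [hprod, coeff_X_pow]
    by_cases hk : k = n - σ.support.card
    · subst hk
      have heps : epsR n (n - σ.support.card) = (-1) ^ (σ.support.card / 2) := by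
        rw [epsR, Nat.sub_sub_self hmn]
      rw [if_pos rfl, heps, hsgn]
      rw [mul_one, ← pow_add]
      exact (Even.neg_one_pow ⟨_, rfl⟩).symm
    · rw [if_neg hk, mul_zero, mul_zero]
  · push_neg at hAdj
    obtain ⟨i, hi, hna⟩ := hAdj
    have hzero : (∏ j, (Matrix.charmatrix M) (σ j) j) = 0 := by
      refine Finset.prod_eq_zero (Finset.mem_univ i) ?_
      rw [Matrix.charmatrix_apply_ne _ _ _ (Equiv.Perm.mem_support.1 hi), hM]
      simp [adjMat, hna]
    rw [hzero]
    simp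

lemma permPolyG_natDegree {V : Type*} [Fintype V] (G : SimpleGraph V)
    (hbip : G.Colorable 2) (hfree : C4kFree G) :
    (permPolyG ℝ G).natDegree = Fintype.card V := by
  classical
  rw [perm_eq_PhiT G hbip hfree, PhiT_natDegree, charPolyG,
    Matrix.charpoly_natDegree_eq_dim]

end AuxC4k

/-- Two `C_{4k}`-free bipartite graphs are cospectral iff they are
per-cospectral. -/
theorem stmt_10 {V₁ V₂ : Type*} [Fintype V₁] [Fintype V₂]
    (G₁ : SimpleGraph V₁) (G₂ : SimpleGraph V₂)
    (hbip₁ : G₁.Colorable 2) (hbip₂ : G₂.Colorable 2)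
    (hfree₁ : C4kFree G₁) (hfree₂ : C4kFree G₂) :
    charPolyG ℝ G₁ = charPolyG ℝ G₂ ↔ permPolyG ℝ G₁ = permPolyG ℝ G₂ := by
  classical
  have h1 := perm_eq_PhiT G₁ hbip₁ hfree₁
  have h2 := perm_eq_PhiT G₂ hbip₂ hfree₂
  have hd1 : (charPolyG ℝ G₁).natDegree = Fintype.card V₁ := by
    rw [charPolyG, Matrix.charpoly_natDegree_eq_dim]
  have hd2 : (charPolyG ℝ G₂).natDegree = Fintype.card V₂ := by
    rw [charPolyG, Matrix.charpoly_natDegree_eq_dim]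
  constructor
  · intro h
    have hn : Fintype.card V₁ = Fintype.card V₂ := by rw [← hd1, ← hd2, h]
    rw [h1, h2, h, hn]
  · intro h
    have hn : Fintype.card V₁ = Fintype.card V₂ := by
      rw [← hd1, ← hd2, ← PhiT_natDegree (Fintype.card V₁) (charPolyG ℝ G₁),
        ← PhiT_natDegree (Fintype.card V₂) (charPolyG ℝ G₂), ← h1, ← h2, h]
    have e1 : charPolyG ℝ G₁ = PhiT (Fintype.card V₁) (permPolyG ℝ G₁) := by
      rw [h1, PhiT_PhiT]
    have e2 : charPolyG ℝ G₂ = PhiT (Fintype.card V₂) (permPolyG ℝ G₂) := by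
      rw [h2, PhiT_PhiT]
    rw [e1, e2, h, hn]


end
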